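/- Let $L_k = \langle -1 \rangle^k$ and $H$ the hyperbolic plane. Then every automorphism of $L_k \oplus H$ of the form $A \oplus \mathrm{id}_H$ with $A \in \mathcal{O}(L_k)$ lies in the subgroup of $\mathcal{O}(L_k \oplus H)$ generated by the Eichler transvections $E_w^x, E_w^y$ (for $w \in L_k$ of even square), the automorphisms $\Phi_w$ (for $w \in L_k$ of odd square), and the automorphisms of $H$ (extended by identity on $L_k$). -/

import Mathlib

/-- The negative definite diagonal form on `ℤ^k`. -/
def negQ (k : ℕ) (u v : Fin k → ℤ) : ℤ := -∑ i, u i * v i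

namespace AutStab
variable {k : ℕ}

lemma negQ_add_left (u v w : Fin k → ℤ) : negQ k (u + v) w = negQ k u w + negQ k v w := by
  simp [negQ, add_mul, Finset.sum_add_distrib]; ring

lemma negQ_smul_left (c : ℤ) (u w : Fin k → ℤ) : negQ k (c • u) w = c * negQ k u w := by
  simp [negQ, Finset.mul_sum, mul_assoc]

lemma negQ_neg_left (u w : Fin k → ℤ) : negQ k (-u) w = - negQ k u w := by
  simp [negQ, Finset.sum_neg_distrib]

lemma negQ_comm (u w : Fin k → ℤ) : negQ k u w = negQ k w u := by
  simp [negQ, mul_comm]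

lemma negQ_smul_right (c : ℤ) (u w : Fin k → ℤ) : negQ k u (c • w) = c * negQ k u w := by
  rw [negQ_comm, negQ_smul_left, negQ_comm]

lemma negQ_neg_right (u w : Fin k → ℤ) : negQ k u (-w) = - negQ k u w := by
  rw [negQ_comm, negQ_neg_left, negQ_comm]

lemma negQ_single_right (u : Fin k → ℤ) (i : Fin k) :
    negQ k u (Pi.single i 1) = - u i := by
  simp [negQ, Pi.single_apply, mul_ite, Finset.sum_ite_eq']

lemma negQ_single_left (w : Fin k → ℤ) (i : Fin k) :
    negQ k (Pi.single i 1) w = - w i := by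
  rw [negQ_comm, negQ_single_right]

/-- Build a ℤ-linear equivalence from additive maps. -/
def mkE {M : Type*} [AddCommGroup M] (f g : M → M)
    (hf : ∀ x y, f (x + y) = f x + f y) (hg : ∀ x y, g (x + y) = g x + g y)
    (hfg : ∀ x, f (g x) = x) (hgf : ∀ x, g (f x) = x) : M ≃ₗ[ℤ] M :=
  LinearEquiv.ofLinear (AddMonoidHom.mk' f hf).toIntLinearMap
    (AddMonoidHom.mk' g hg).toIntLinearMap
    (LinearMap.ext hfg) (LinearMap.ext hgf)

@[simp] lemma mkE_apply {M : Type*} [AddCommGroup M] (f g : M → M) (hf hg hfg hgf) (x : M) :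
    mkE f g hf hg hfg hgf x = f x := rfl

abbrev Big (k : ℕ) := (Fin k → ℤ) × ℤ × ℤ

def genYe (w : Fin k → ℤ) (s : ℤ) (hw : negQ k w w = 2 * s) : Big k ≃ₗ[ℤ] Big k :=
  mkE (fun p => (p.1 + p.2.1 • w, (p.2.1, p.2.2 - negQ k p.1 w - p.2.1 * s)))
      (fun p => (p.1 + p.2.1 • (-w), (p.2.1, p.2.2 - negQ k p.1 (-w) - p.2.1 * s)))
      (by intro x y
          refine Prod.ext ?_ (Prod.ext ?_ ?_) <;>
            simp only [Prod.fst_add, Prod.snd_add, negQ_add_left, Prod.mk_add_mk]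
          all_goals first | module | ring)
      (by intro x y
          refine Prod.ext ?_ (Prod.ext ?_ ?_) <;>
            simp only [Prod.fst_add, Prod.snd_add, negQ_add_left, Prod.mk_add_mk]
          all_goals first | module | ring)
      (by intro x
          refine Prod.ext ?_ (Prod.ext ?_ ?_) <;>
            simp only [negQ_add_left, negQ_smul_left, negQ_neg_left, negQ_neg_right, hw,
              smul_neg, Prod.mk.injEq]
          all_goals first | module | ring)
      (by intro x
          refine Prod.ext ?_ (Prod.ext ?_ ?_) <;>
            simp only [negQ_add_left, negQ_smul_left, negQ_neg_left, negQ_neg_right, hw,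
              smul_neg, Prod.mk.injEq]
          all_goals first | module | ring)
end AutStab
namespace AutStab
variable {k : ℕ}
def genXe (w : Fin k → ℤ) (s : ℤ) (hw : negQ k w w = 2 * s) : Big k ≃ₗ[ℤ] Big k :=
  mkE (fun p => (p.1 + p.2.2 • w, (p.2.1 - negQ k p.1 w - p.2.2 * s, p.2.2)))
      (fun p => (p.1 + p.2.2 • (-w), (p.2.1 - negQ k p.1 (-w) - p.2.2 * s, p.2.2)))
      (by intro x y
          refine Prod.ext ?_ (Prod.ext ?_ ?_) <;>
            simp only [Prod.fst_add, Prod.snd_add, negQ_add_left, Prod.mk_add_mk]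
          all_goals first | module | ring)
      (by intro x y
          refine Prod.ext ?_ (Prod.ext ?_ ?_) <;>
            simp only [Prod.fst_add, Prod.snd_add, negQ_add_left, Prod.mk_add_mk]
          all_goals first | module | ring)
      (by intro x
          refine Prod.ext ?_ (Prod.ext ?_ ?_) <;>
            simp only [negQ_add_left, negQ_smul_left, negQ_neg_left, negQ_neg_right, hw,
              smul_neg, Prod.mk.injEq]
          all_goals first | module | ring)
      (by intro x
          refine Prod.ext ?_ (Prod.ext ?_ ?_) <;>
            simp only [negQ_add_left, negQ_smul_left, negQ_neg_left, negQ_neg_right, hw,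
              smul_neg, Prod.mk.injEq]
          all_goals first | module | ring)

def genPhi (w : Fin k → ℤ) (s : ℤ) (hw : negQ k w w = 2 * s - 1) : Big k ≃ₗ[ℤ] Big k :=
  mkE (fun p => (p.1 + (p.2.1 * (1 - (2 * s - 1)) + 2 * p.2.2 - 2 * negQ k p.1 w) • w,
        (2 * negQ k p.1 w + p.2.1 * (2 * s - 1) - 2 * p.2.2,
         (1 - (2 * s - 1)) * negQ k p.1 w - 2 * p.2.1 * (s - 1) ^ 2 + p.2.2 * (2 * s - 1))))
      (fun p => (p.1 + (p.2.1 * (1 - (2 * s - 1)) + 2 * p.2.2 - 2 * negQ k p.1 w) • w,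
        (2 * negQ k p.1 w + p.2.1 * (2 * s - 1) - 2 * p.2.2,
         (1 - (2 * s - 1)) * negQ k p.1 w - 2 * p.2.1 * (s - 1) ^ 2 + p.2.2 * (2 * s - 1))))
      (by intro x y
          refine Prod.ext ?_ (Prod.ext ?_ ?_) <;>
            simp only [Prod.fst_add, Prod.snd_add, negQ_add_left, Prod.mk_add_mk]
          all_goals first | module | ring)
      (by intro x y
          refine Prod.ext ?_ (Prod.ext ?_ ?_) <;>
            simp only [Prod.fst_add, Prod.snd_add, negQ_add_left, Prod.mk_add_mk]
          all_goals first | module | ring)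
      (by intro x
          refine Prod.ext ?_ (Prod.ext ?_ ?_) <;>
            simp only [negQ_add_left, negQ_smul_left, negQ_neg_left, negQ_neg_right, hw,
              smul_neg, Prod.mk.injEq]
          all_goals first | module | ring)
      (by intro x
          refine Prod.ext ?_ (Prod.ext ?_ ?_) <;>
            simp only [negQ_add_left, negQ_smul_left, negQ_neg_left, negQ_neg_right, hw,
              smul_neg, Prod.mk.injEq]
          all_goals first | module | ring)
end AutStab
namespace AutStab
variable {k : ℕ}

def gset (k : ℕ) : Set (Big k ≃ₗ[ℤ] Big k) :=
  {g | (∃ (w : Fin k → ℤ) (s : ℤ), negQ k w w = 2 * s ∧ ∀ p,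
          g p = (p.1 + p.2.1 • w, (p.2.1, p.2.2 - negQ k p.1 w - p.2.1 * s))) ∨
        (∃ (w : Fin k → ℤ) (s : ℤ), negQ k w w = 2 * s ∧ ∀ p,
          g p = (p.1 + p.2.2 • w, (p.2.1 - negQ k p.1 w - p.2.2 * s, p.2.2))) ∨
        (∃ (w : Fin k → ℤ) (s : ℤ), negQ k w w = 2 * s - 1 ∧ ∀ p,
          g p = (p.1 + (p.2.1 * (1 - (2 * s - 1)) + 2 * p.2.2 - 2 * negQ k p.1 w) • w,
            (2 * negQ k p.1 w + p.2.1 * (2 * s - 1) - 2 * p.2.2,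
             (1 - (2 * s - 1)) * negQ k p.1 w - 2 * p.2.1 * (s - 1) ^ 2
               + p.2.2 * (2 * s - 1)))) ∨
        (∃ h : (ℤ × ℤ) ≃ₗ[ℤ] (ℤ × ℤ),
          (∀ q q' : ℤ × ℤ, (h q).1 * (h q').2 + (h q).2 * (h q').1 = q.1 * q'.2 + q.2 * q'.1) ∧
          ∀ p, g p = (p.1, h p.2))}

lemma memY (w : Fin k → ℤ) (s : ℤ) (hw : negQ k w w = 2 * s) :
    genYe w s hw ∈ Subgroup.closure (gset k) :=
  Subgroup.subset_closure (Or.inl ⟨w, s, hw, fun _ => rfl⟩)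

lemma memX (w : Fin k → ℤ) (s : ℤ) (hw : negQ k w w = 2 * s) :
    genXe w s hw ∈ Subgroup.closure (gset k) :=
  Subgroup.subset_closure (Or.inr (Or.inl ⟨w, s, hw, fun _ => rfl⟩))

lemma memPhi (w : Fin k → ℤ) (s : ℤ) (hw : negQ k w w = 2 * s - 1) :
    genPhi w s hw ∈ Subgroup.closure (gset k) :=
  Subgroup.subset_closure (Or.inr (Or.inr (Or.inl ⟨w, s, hw, fun _ => rfl⟩)))

def swapH : Big k ≃ₗ[ℤ] Big k :=
  (LinearEquiv.refl ℤ (Fin k → ℤ)).prodCongr (LinearEquiv.prodComm ℤ ℤ ℤ)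

def negH : Big k ≃ₗ[ℤ] Big k :=
  (LinearEquiv.refl ℤ (Fin k → ℤ)).prodCongr (LinearEquiv.neg ℤ)

@[simp] lemma swapH_apply (p : Big k) : swapH p = (p.1, (p.2.2, p.2.1)) := rfl
@[simp] lemma negH_apply (p : Big k) : negH p = (p.1, (-p.2.1, -p.2.2)) := rfl

lemma memSwapH : (swapH : Big k ≃ₗ[ℤ] Big k) ∈ Subgroup.closure (gset k) :=
  Subgroup.subset_closure (Or.inr (Or.inr (Or.inr
    ⟨LinearEquiv.prodComm ℤ ℤ ℤ, fun q q' => by show q.2 * q'.1 + q.1 * q'.2 = _; ring,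
      fun _ => rfl⟩)))

lemma memNegH : (negH : Big k ≃ₗ[ℤ] Big k) ∈ Subgroup.closure (gset k) :=
  Subgroup.subset_closure (Or.inr (Or.inr (Or.inr
    ⟨LinearEquiv.neg ℤ, fun q q' => by simp; try ring, fun _ => rfl⟩)))
end AutStab
namespace AutStab
variable {k : ℕ}

lemma LEmul_apply {M : Type*} [AddCommGroup M] [Module ℤ M] (f g : M ≃ₗ[ℤ] M) (x : M) :
    (f * g) x = f (g x) := rfl

lemma refl2_mem (w : Fin k → ℤ) (hw : negQ k w w = -2) (B : Big k ≃ₗ[ℤ] Big k)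
    (hB : ∀ p, B p = (p.1 + negQ k p.1 w • w, p.2)) :
    B ∈ Subgroup.closure (gset k) := by
  have h1 : negQ k (-w) (-w) = 2 * (-1) := by
    rw [negQ_neg_left, negQ_neg_right, hw]; ring
  have h2 : negQ k w w = 2 * (-1) := by rw [hw]; ring
  have key : B = swapH * genYe (-w) (-1) h1 * genXe w (-1) h2 * genYe (-w) (-1) h1 := by
    apply LinearEquiv.toLinearMap_injective
    apply LinearMap.ext
    intro p
    simp only [LinearEquiv.coe_coe, LEmul_apply, hB, genYe, genXe, mkE_apply,
      swapH_apply, negQ_add_left, negQ_smul_left, negQ_neg_left, negQ_neg_right, hw, smul_neg]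
    refine Prod.ext ?_ (Prod.ext ?_ ?_)
    all_goals first | module | ring
  rw [key]
  exact mul_mem (mul_mem (mul_mem memSwapH (memY _ _ _)) (memX _ _ _)) (memY _ _ _)

lemma refl1_mem (w : Fin k → ℤ) (hw : negQ k w w = -1) (B : Big k ≃ₗ[ℤ] Big k)
    (hB : ∀ p, B p = (p.1 + (2 * negQ k p.1 w) • w, p.2)) :
    B ∈ Subgroup.closure (gset k) := by
  have h1 : negQ k ((2 : ℤ) • w) ((2 : ℤ) • w) = 2 * (-2) := by
    rw [negQ_smul_left, negQ_smul_right, hw]; ring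
  have h2 : negQ k ((-2 : ℤ) • w) ((-2 : ℤ) • w) = 2 * (-2) := by
    rw [negQ_smul_left, negQ_smul_right, hw]; ring
  have h3 : negQ k w w = 2 * 0 - 1 := by rw [hw]; ring
  have key : B = negH * genXe ((2 : ℤ) • w) (-2) h1 * genPhi w 0 h3
      * genYe ((-2 : ℤ) • w) (-2) h2 := by
    apply LinearEquiv.toLinearMap_injective
    apply LinearMap.ext
    intro p
    simp only [LinearEquiv.coe_coe, LEmul_apply, hB, genYe, genXe, genPhi, mkE_apply,
      negH_apply, negQ_add_left, negQ_smul_left, negQ_smul_right, negQ_neg_left, negQ_neg_right,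
      hw, smul_neg]
    refine Prod.ext ?_ (Prod.ext ?_ ?_)
    all_goals first | module | ring
  rw [key]
  exact mul_mem (mul_mem (mul_mem memNegH (memX _ _ _)) (memPhi _ _ _)) (memY _ _ _)
end AutStab
namespace AutStab
variable {k : ℕ}

def permE (σ : Equiv.Perm (Fin k)) : (Fin k → ℤ) ≃ₗ[ℤ] (Fin k → ℤ) :=
  mkE (fun u => u ∘ σ.symm) (fun u => u ∘ σ) (fun _ _ => rfl) (fun _ _ => rfl)
    (fun u => by funext i; simp) (fun u => by funext i; simp)

@[simp] lemma permE_apply (σ : Equiv.Perm (Fin k)) (u : Fin k → ℤ) (i : Fin k) :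
    permE σ u i = u (σ.symm i) := rfl

lemma permE_mul (σ τ : Equiv.Perm (Fin k)) : permE (σ * τ) = permE σ * permE τ := by
  apply LinearEquiv.toLinearMap_injective
  apply LinearMap.ext
  intro u
  funext i
  rfl

def Dfin (T : Finset (Fin k)) : (Fin k → ℤ) ≃ₗ[ℤ] (Fin k → ℤ) :=
  mkE (fun u i => if i ∈ T then -u i else u i) (fun u i => if i ∈ T then -u i else u i)
    (fun x y => by funext i; by_cases h : i ∈ T <;> simp [h] <;> ring)
    (fun x y => by funext i; by_cases h : i ∈ T <;> simp [h] <;> ring)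
    (fun u => by funext i; by_cases h : i ∈ T <;> simp [h])
    (fun u => by funext i; by_cases h : i ∈ T <;> simp [h])

@[simp] lemma Dfin_apply (T : Finset (Fin k)) (u : Fin k → ℤ) (i : Fin k) :
    Dfin T u i = if i ∈ T then -u i else u i := rfl

lemma prodRefl_mul (f g : (Fin k → ℤ) ≃ₗ[ℤ] (Fin k → ℤ)) :
    (f * g).prodCongr (LinearEquiv.refl ℤ (ℤ × ℤ)) =
      f.prodCongr (LinearEquiv.refl ℤ (ℤ × ℤ)) * g.prodCongr (LinearEquiv.refl ℤ (ℤ × ℤ)) := by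
  apply LinearEquiv.toLinearMap_injective
  apply LinearMap.ext
  intro p
  rfl

lemma memPermE (σ : Equiv.Perm (Fin k)) :
    (permE σ).prodCongr (LinearEquiv.refl ℤ (ℤ × ℤ)) ∈ Subgroup.closure (gset k) := by
  refine Equiv.Perm.swap_induction_on σ ?_ ?_
  · have h1 : (permE (1 : Equiv.Perm (Fin k))).prodCongr (LinearEquiv.refl ℤ (ℤ × ℤ)) = 1 := by
      apply LinearEquiv.toLinearMap_injective
      exact LinearMap.ext fun p => rfl
    rw [h1]
    exact one_mem _
  · intro f x y hxy hf
    rw [permE_mul, prodRefl_mul]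
    refine mul_mem ?_ hf
    have hx : (Pi.single x 1 : Fin k → ℤ) y = 0 := Pi.single_eq_of_ne (Ne.symm hxy) 1
    have hy : (Pi.single y 1 : Fin k → ℤ) x = 0 := Pi.single_eq_of_ne hxy 1
    refine refl2_mem (Pi.single x 1 - Pi.single y 1) ?_ _ ?_
    · rw [sub_eq_add_neg, negQ_add_left, negQ_neg_left, negQ_single_left, negQ_single_left]
      rw [Pi.add_apply, Pi.add_apply, Pi.neg_apply, Pi.neg_apply, hx, hy]
      simp
    · intro p
      refine Prod.ext ?_ rfl
      have hq : negQ k p.1 (Pi.single x 1 - Pi.single y 1) = p.1 y - p.1 x := by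
        rw [sub_eq_add_neg, negQ_comm, negQ_add_left, negQ_neg_left, negQ_single_left,
          negQ_single_left]
        ring
      show (fun i => p.1 ((Equiv.swap x y).symm i)) = _
      rw [hq]
      funext i
      simp only [Pi.add_apply, Pi.smul_apply, Pi.sub_apply, smul_eq_mul, Equiv.symm_swap]
      rcases eq_or_ne i x with rfl | hix
      · rw [Equiv.swap_apply_left]
        simp [hy, Pi.single_eq_same]
      · rcases eq_or_ne i y with rfl | hiy
        · rw [Equiv.swap_apply_right]
          simp [hx, Pi.single_eq_same]
        · rw [Equiv.swap_apply_of_ne_of_ne hix hiy]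
          simp [Pi.single_eq_of_ne hix, Pi.single_eq_of_ne hiy]

end AutStab
namespace AutStab
variable {k : ℕ}

lemma memDfin (T : Finset (Fin k)) :
    (Dfin T).prodCongr (LinearEquiv.refl ℤ (ℤ × ℤ)) ∈ Subgroup.closure (gset k) := by
  classical
  induction T using Finset.induction_on with
  | empty =>
    have h1 : (Dfin (∅ : Finset (Fin k))).prodCongr (LinearEquiv.refl ℤ (ℤ × ℤ)) = 1 := by
      apply LinearEquiv.toLinearMap_injective
      apply LinearMap.ext
      intro p
      refine Prod.ext ?_ rfl
      funext i
      simp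
    rw [h1]
    exact one_mem _
  | @insert a T ha ih =>
    have key : (Dfin (insert a T)).prodCongr (LinearEquiv.refl ℤ (ℤ × ℤ)) =
        (Dfin {a}).prodCongr (LinearEquiv.refl ℤ (ℤ × ℤ)) *
          (Dfin T).prodCongr (LinearEquiv.refl ℤ (ℤ × ℤ)) := by
      apply LinearEquiv.toLinearMap_injective
      apply LinearMap.ext
      intro p
      refine Prod.ext ?_ rfl
      funext i
      show (if i ∈ insert a T then -p.1 i else p.1 i) = _
      show _ = (if i ∈ ({a} : Finset (Fin k)) then -(Dfin T p.1 i) else Dfin T p.1 i)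
      rcases eq_or_ne i a with rfl | hia
      · simp [ha]
      · by_cases hiT : i ∈ T <;> simp [hia, hiT]
    rw [key]
    refine mul_mem ?_ ih
    refine refl1_mem (Pi.single a 1) ?_ _ ?_
    · rw [negQ_single_left, Pi.single_eq_same]
    · intro p
      refine Prod.ext ?_ rfl
      funext i
      show (if i ∈ ({a} : Finset (Fin k)) then -p.1 i else p.1 i) = _
      rw [negQ_single_right]
      rcases eq_or_ne i a with rfl | hia
      · simp [Pi.single_eq_same]
        ring
      · simp [hia, Pi.single_eq_of_ne hia]
end AutStab
namespace AutStab
variable {k : ℕ}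

lemma sum_sq_one (v : Fin k → ℤ) (hv : ∑ i, v i * v i = 1) :
    ∃ i, (v i = 1 ∨ v i = -1) ∧ ∀ l, l ≠ i → v l = 0 := by
  classical
  have hex : ∃ i, v i ≠ 0 := by
    by_contra h
    push_neg at h
    simp [h] at hv
  obtain ⟨i, hi⟩ := hex
  have h1 : 1 ≤ v i * v i := by
    rcases hi.lt_or_gt with h | h <;> nlinarith
  have hsplit : v i * v i + ∑ l ∈ Finset.univ.erase i, v l * v l = 1 := by
    exact (Finset.add_sum_erase Finset.univ (fun l => v l * v l) (Finset.mem_univ i)).trans hv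
  have hnn : ∀ l ∈ Finset.univ.erase i, 0 ≤ v l * v l := fun l _ => mul_self_nonneg _
  have hsum0 : ∑ l ∈ Finset.univ.erase i, v l * v l = 0 := by
    have := Finset.sum_nonneg hnn
    omega
  have hzero : ∀ l, l ≠ i → v l = 0 := by
    intro l hl
    have := (Finset.sum_eq_zero_iff_of_nonneg hnn).mp hsum0 l
      (Finset.mem_erase.mpr ⟨hl, Finset.mem_univ l⟩)
    exact mul_self_eq_zero.mp this
  have hvi : v i * v i = 1 := by omega
  refine ⟨i, ?_, hzero⟩
  rcases Int.eq_one_or_neg_one_of_mul_eq_one' hvi with ⟨h, _⟩ | ⟨h, _⟩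
  · exact Or.inl h
  · exact Or.inr h

theorem main (A : (Fin k → ℤ) ≃ₗ[ℤ] (Fin k → ℤ))
    (hA : ∀ v w : Fin k → ℤ, negQ k (A v) (A w) = negQ k v w) :
    (A.prodCongr (LinearEquiv.refl ℤ (ℤ × ℤ))) ∈ Subgroup.closure (gset k) := by
  classical
  set e : Fin k → (Fin k → ℤ) := fun j => Pi.single j 1 with he
  have hcol : ∀ j, ∑ i, A (e j) i * A (e j) i = 1 := by
    intro j
    have hee : negQ k (e j) (e j) = -1 := by
      simp only [he]
      rw [negQ_single_right, Pi.single_eq_same]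
    have := hA (e j) (e j)
    rw [hee] at this
    unfold negQ at this
    omega
  have hchoice : ∀ j, ∃ i, (A (e j) i = 1 ∨ A (e j) i = -1) ∧ ∀ l, l ≠ i → A (e j) l = 0 :=
    fun j => sum_sq_one _ (hcol j)
  choose τ hsign hzero using hchoice
  have hτinj : Function.Injective τ := by
    intro j j' hjj'
    by_contra hne
    have h0 : negQ k (A (e j)) (A (e j')) = 0 := by
      rw [hA]
      simp only [he]
      rw [negQ_single_right, Pi.single_eq_of_ne (Ne.symm hne), neg_zero]
    have hsum : ∑ i, A (e j) i * A (e j') i = A (e j) (τ j) * A (e j') (τ j) := by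
      refine Finset.sum_eq_single (τ j) ?_ ?_
      · intro l _ hl
        rw [hzero j l hl, zero_mul]
      · intro h
        exact absurd (Finset.mem_univ _) h
    unfold negQ at h0
    rw [hsum, hjj'] at h0
    rcases hsign j with h1 | h1 <;> rcases hsign j' with h2 | h2 <;>
      rw [hjj'] at h1 <;> rw [h1, h2] at h0 <;> norm_num at h0
  have hτbij : Function.Bijective τ := Finite.injective_iff_bijective.mp hτinj
  set τp : Equiv.Perm (Fin k) := Equiv.ofBijective τ hτbij with hτp
  set T : Finset (Fin k) := Finset.univ.filter (fun j => A (e j) (τ j) = -1) with hT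
  have key : A = permE τp * Dfin T := by
    apply LinearEquiv.toLinearMap_injective
    apply (Pi.basisFun ℤ (Fin k)).ext
    intro j
    have hbe : (Pi.basisFun ℤ (Fin k)) j = e j := by
      simp [he, Pi.basisFun_apply]
    rw [hbe]
    show A (e j) = (permE τp) (Dfin T (e j))
    funext i
    show A (e j) i = (Dfin T (e j)) (τp.symm i)
    have hτpj : τp j = τ j := rfl
    rcases eq_or_ne i (τ j) with rfl | hne
    · have : τp.symm (τ j) = j := by
        rw [← hτpj, Equiv.symm_apply_apply]
      rw [this]
      show A (e j) (τ j) = if j ∈ T then -(e j j) else e j j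
      have hejj : e j j = 1 := Pi.single_eq_same j 1
      by_cases hj : A (e j) (τ j) = -1
      · rw [if_pos (by simp [hT, hj]), hejj, hj]
      · have : A (e j) (τ j) = 1 := by
          rcases hsign j with h | h
          · exact h
          · exact absurd h hj
        rw [if_neg (by simp [hT, hj]), hejj, this]
    · have hsj : τp.symm i ≠ j := by
        intro h
        apply hne
        rw [← hτpj, ← h, Equiv.apply_symm_apply]
      rw [hzero j i hne]
      show (0 : ℤ) = if τp.symm i ∈ T then -(e j (τp.symm i)) else e j (τp.symm i)
      have : e j (τp.symm i) = 0 := Pi.single_eq_of_ne hsj 1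
      rw [this]
      simp
  rw [key, prodRefl_mul]
  exact mul_mem (memPermE τp) (memDfin T)
end AutStab


/-- Every automorphism of `L_k ⊕ H` of the form `A ⊕ id_H` with `A ∈ O(L_k)` lies in the
subgroup of `O(L_k ⊕ H)` generated by the Eichler transvections `E_w^x, E_w^y` (for `w` of even
square), Wall's automorphisms `Φ_w` (for `w` of odd square `r = 2s-1`), and the automorphisms of
the hyperbolic plane `H` extended by the identity on `L_k`. Elements of `L_k ⊕ H` are written
`(u, (a, b))` for `u + a x + b y`, with hyperbolic form `((a,b),(c,d)) ↦ a*d + b*c`. -/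
theorem aut_stably_generated (k : ℕ) (A : (Fin k → ℤ) ≃ₗ[ℤ] (Fin k → ℤ))
    (hA : ∀ v w : Fin k → ℤ, negQ k (A v) (A w) = negQ k v w) :
    (A.prodCongr (LinearEquiv.refl ℤ (ℤ × ℤ))) ∈
      Subgroup.closure {g : ((Fin k → ℤ) × ℤ × ℤ) ≃ₗ[ℤ] ((Fin k → ℤ) × ℤ × ℤ) |
        (∃ (w : Fin k → ℤ) (s : ℤ), negQ k w w = 2 * s ∧ ∀ p,
          g p = (p.1 + p.2.1 • w, (p.2.1, p.2.2 - negQ k p.1 w - p.2.1 * s))) ∨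
        (∃ (w : Fin k → ℤ) (s : ℤ), negQ k w w = 2 * s ∧ ∀ p,
          g p = (p.1 + p.2.2 • w, (p.2.1 - negQ k p.1 w - p.2.2 * s, p.2.2))) ∨
        (∃ (w : Fin k → ℤ) (s : ℤ), negQ k w w = 2 * s - 1 ∧ ∀ p,
          g p = (p.1 + (p.2.1 * (1 - (2 * s - 1)) + 2 * p.2.2 - 2 * negQ k p.1 w) • w,
            (2 * negQ k p.1 w + p.2.1 * (2 * s - 1) - 2 * p.2.2,
             (1 - (2 * s - 1)) * negQ k p.1 w - 2 * p.2.1 * (s - 1) ^ 2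
               + p.2.2 * (2 * s - 1)))) ∨
        (∃ h : (ℤ × ℤ) ≃ₗ[ℤ] (ℤ × ℤ),
          (∀ q q' : ℤ × ℤ, (h q).1 * (h q').2 + (h q).2 * (h q').1 = q.1 * q'.2 + q.2 * q'.1) ∧
          ∀ p, g p = (p.1, h p.2))} := by
  exact AutStab.main A hA
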